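/- arXiv:1612.01386 — 2 statements merged into one kernel-verified Lean document; each statement's English description precedes it below -/
import Mathlib

section
/- Let s, c, y₀ be real numbers with s > 0, suppose the discriminant (1 − 1/s)² − 4c/s is strictly positive, set Ξ = √((1 − 1/s)² − 4c/s), assume |2y₀ − (1 − 1/s)| < Ξ, and set Ω₀ = arctanh((2y₀ − (1 − 1/s))/Ξ). Define the tanh-formula T(t) = ½(1 − 1/s) + (Ξ/2)·tanh((sΞ/2)·t + Ω₀). Then T(0) = y₀ and T satisfies the Riccati differential equation T′(t) = (s − 1)·T(t) − s·T(t)² − c for all t ∈ ℝ. -/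
/-- The real inverse hyperbolic tangent, `arctanh x = ½ log((1+x)/(1-x))`,
defined for `x ∈ (-1, 1)`. -/
noncomputable def arctanh (x : ℝ) : ℝ := (1 / 2) * Real.log ((1 + x) / (1 - x))

lemma hasDerivAt_tanh' (x : ℝ) :
    HasDerivAt Real.tanh (1 - Real.tanh x ^ 2) x := by
  have hc := Real.hasDerivAt_cosh x
  have hsd := Real.hasDerivAt_sinh x
  have hcp : Real.cosh x ≠ 0 := (Real.cosh_pos x).ne'
  have h := hsd.div hc hcp
  have heq : Real.tanh = fun y => Real.sinh y / Real.cosh y := by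
    funext y; exact Real.tanh_eq_sinh_div_cosh y
  rw [heq]
  convert h using 1
  iterate 3 rfl
  field_simp

lemma tanh_arctanh' (x : ℝ) (h : |x| < 1) :
    Real.tanh ((1 / 2) * Real.log ((1 + x) / (1 - x))) = x := by
  rw [abs_lt] at h
  have h1 : 0 < 1 + x := by linarith
  have h2 : 0 < 1 - x := by linarith
  have hq : 0 < (1 + x) / (1 - x) := div_pos h1 h2
  set y := (1 / 2) * Real.log ((1 + x) / (1 - x)) with hy
  set E := Real.exp y with hE
  have hEpos : 0 < E := Real.exp_pos y
  have hE2 : E ^ 2 = (1 + x) / (1 - x) := by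
    rw [hE, ← Real.exp_nat_mul]
    norm_num [hy, mul_comm, ← mul_assoc]
    rw [Real.exp_log hq]
  rw [Real.tanh_eq_sinh_div_cosh, Real.sinh_eq, Real.cosh_eq, Real.exp_neg]
  rw [← hE]
  rw [div_eq_iff (by positivity)]
  have : (E - E⁻¹) / 2 = x * ((E + E⁻¹) / 2) ↔ E^2 - 1 = x * (E^2 + 1) := by
    constructor <;> intro hh <;> field_simp at hh ⊢ <;> nlinarith
  rw [this, hE2]
  field_simp
  ring

/-- The tanh-formula `T(t) = ½(1 - 1/s) + (Ξ/2) tanh((sΞ/2)t + Ω₀)` satisfies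
`T(0) = y₀` and the Riccati equation `T' = (s-1)T - sT² - c`. -/
theorem tanh_formula_solves_riccati (s c y₀ Ξ Ω₀ : ℝ) (hs : 0 < s)
    (hdisc : 0 < (1 - 1 / s) ^ 2 - 4 * c / s)
    (hΞ : Ξ = Real.sqrt ((1 - 1 / s) ^ 2 - 4 * c / s))
    (hy₀ : |2 * y₀ - (1 - 1 / s)| < Ξ)
    (hΩ₀ : Ω₀ = arctanh ((2 * y₀ - (1 - 1 / s)) / Ξ))
    (T : ℝ → ℝ)
    (hT : ∀ t, T t = (1 / 2) * (1 - 1 / s) +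
      (Ξ / 2) * Real.tanh ((s * Ξ / 2) * t + Ω₀)) :
    T 0 = y₀ ∧ ∀ t, HasDerivAt T ((s - 1) * T t - s * (T t) ^ 2 - c) t := by
  have hΞpos : 0 < Ξ := by rw [hΞ]; exact Real.sqrt_pos.mpr hdisc
  have hΞsq : Ξ ^ 2 = (1 - 1 / s) ^ 2 - 4 * c / s := by
    rw [hΞ]; exact Real.sq_sqrt hdisc.le
  have habs : |(2 * y₀ - (1 - 1 / s)) / Ξ| < 1 := by
    rw [abs_div, abs_of_pos hΞpos, div_lt_one hΞpos]; exact hy₀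
  constructor
  · rw [hT 0]
    simp only [mul_zero, zero_add]
    rw [hΩ₀, arctanh, tanh_arctanh' _ habs]
    field_simp
    ring
  · intro t
    have hlin : HasDerivAt (fun t : ℝ => (s * Ξ / 2) * t + Ω₀) (s * Ξ / 2) t := by
      simpa using ((hasDerivAt_id t).const_mul (s * Ξ / 2)).add_const Ω₀
    have htanh := (hasDerivAt_tanh' ((s * Ξ / 2) * t + Ω₀)).comp t hlin
    have hD := (htanh.const_mul (Ξ / 2)).const_add ((1 / 2) * (1 - 1 / s))
    have hTeq : T = fun t => (1 / 2) * (1 - 1 / s) +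
        (Ξ / 2) * Real.tanh ((s * Ξ / 2) * t + Ω₀) := funext hT
    rw [hTeq]
    convert hD using 1
    iterate 3 rfl
    beta_reduce
    set u := Real.tanh ((s * Ξ / 2) * t + Ω₀) with hu
    have hs' : s ≠ 0 := hs.ne'
    have hsΞ : s ^ 2 * Ξ ^ 2 = (s - 1) ^ 2 - 4 * c * s := by
      field_simp at hΞsq
      apply mul_left_cancel₀ (pow_ne_zero 3 hs')
      linear_combination (s ^ 3) * hΞsq
    field_simp
    linear_combination (-(1 : ℝ)) * hsΞ
end

section
/- Let s > 0 and y₀ ∈ ℝ, and let c₁ ≤ c₂ be real numbers such that both parameter triples (y₀, s, c₁) and (y₀, s, c₂) are admissible for the tanh-formula, i.e. (1 − 1/s)² − 4c_i/s > 0 and |2y₀ − (1 − 1/s)| < √((1 − 1/s)² − 4c_i/s) for i = 1, 2. Then for all t ≥ 0, T(t | y₀, s, c₂) ≤ T(t | y₀, s, c₁): the tanh-formula is pointwise nonincreasing in the parameter c on [0, ∞). -/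
section TanhHelpers

lemma my_tanh_lt_one (x : ℝ) : Real.tanh x < 1 := by
  rw [Real.tanh_eq_sinh_div_cosh, div_lt_one (Real.cosh_pos x)]
  rw [Real.sinh_eq, Real.cosh_eq]
  have := Real.exp_pos (-x)
  linarith

lemma my_neg_one_lt_tanh (x : ℝ) : -1 < Real.tanh x := by
  have := my_tanh_lt_one (-x); rw [Real.tanh_neg] at this; linarith

lemma my_sinh_nonneg {x : ℝ} (hx : 0 ≤ x) : 0 ≤ Real.sinh x := by
  simpa using Real.sinh_le_sinh.2 hx

lemma my_tanh_nonneg {x : ℝ} (hx : 0 ≤ x) : 0 ≤ Real.tanh x := by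
  rw [Real.tanh_eq_sinh_div_cosh]
  exact div_nonneg (my_sinh_nonneg hx) (Real.cosh_pos x).le

lemma my_tanh_mono {x y : ℝ} (h : x ≤ y) : Real.tanh x ≤ Real.tanh y := by
  rw [Real.tanh_eq_sinh_div_cosh, Real.tanh_eq_sinh_div_cosh,
    div_le_div_iff₀ (Real.cosh_pos x) (Real.cosh_pos y)]
  have h2 : 0 ≤ Real.sinh (y - x) := my_sinh_nonneg (by linarith)
  rw [Real.sinh_sub] at h2
  linarith

lemma my_tanh_add (x y : ℝ) :
    Real.tanh (x + y) = (Real.tanh x + Real.tanh y) / (1 + Real.tanh x * Real.tanh y) := by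
  have hx := Real.cosh_pos x
  have hy := Real.cosh_pos y
  have hden : 0 < Real.cosh x * Real.cosh y + Real.sinh x * Real.sinh y := by
    rw [← Real.cosh_add]; exact Real.cosh_pos _
  rw [Real.tanh_eq_sinh_div_cosh, Real.tanh_eq_sinh_div_cosh, Real.tanh_eq_sinh_div_cosh,
    Real.sinh_add, Real.cosh_add]
  field_simp

end TanhHelpers

lemma my_tanh_arctanh {x : ℝ} (hx : |x| < 1) : Real.tanh (arctanh x) = x := by
  rcases abs_lt.1 hx with ⟨h1, h2⟩
  have hpos : 0 < (1 + x) / (1 - x) := div_pos (by linarith) (by linarith)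
  have hE : Real.exp (arctanh x) ^ 2 = (1 + x) / (1 - x) := by
    rw [← Real.exp_nat_mul]
    unfold arctanh
    rw [show (2 : ℕ) * ((1:ℝ)/2 * Real.log ((1 + x) / (1 - x))) = Real.log ((1+x)/(1-x)) by
      push_cast; ring]
    exact Real.exp_log hpos
  have hE' : Real.exp (arctanh x) ^ 2 * (1 - x) = 1 + x := by
    rw [hE, div_mul_cancel₀ _ (by linarith : (1:ℝ) - x ≠ 0)]
  have hEpos := Real.exp_pos (arctanh x)
  have hne : Real.exp (arctanh x) ≠ 0 := hEpos.ne'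
  rw [Real.tanh_eq_sinh_div_cosh, Real.sinh_eq, Real.cosh_eq, Real.exp_neg]
  rw [div_eq_iff (by positivity)]
  field_simp
  nlinarith [hE']

lemma key_ineq (a Ξ₁ Ξ₂ T₁ T₂ : ℝ) (hΞ : Ξ₂ ≤ Ξ₁) (ha : |a| < Ξ₂)
    (hT2 : 0 ≤ T₂) (hT : T₂ ≤ T₁) (hT1 : T₁ ≤ 1) :
    Ξ₂ * (a + Ξ₂ * T₂) / (Ξ₂ + a * T₂) ≤ Ξ₁ * (a + Ξ₁ * T₁) / (Ξ₁ + a * T₁) := by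
  rcases abs_lt.1 ha with ⟨hal, har⟩
  have hΞ₂ : 0 < Ξ₂ := lt_of_le_of_lt (abs_nonneg a) ha
  have hT1' : 0 ≤ T₁ := le_trans hT2 hT
  have hT2' : T₂ ≤ 1 := le_trans hT hT1
  have haT2 : -Ξ₂ ≤ a * T₂ := by nlinarith
  have haT1 : -Ξ₂ ≤ a * T₁ := by nlinarith
  have hd2 : 0 < Ξ₂ + a * T₂ := by nlinarith
  have hd1 : 0 < Ξ₁ + a * T₁ := by nlinarith
  have hsq : 0 ≤ Ξ₁^2 - Ξ₂^2 := by nlinarith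
  rw [div_le_div_iff₀ hd2 hd1]
  have ha2 : a^2 ≤ Ξ₂^2 := by
    nlinarith [sq_abs a, mul_self_le_mul_self (abs_nonneg a) ha.le]
  have hC : 0 ≤ Ξ₂ * (Ξ₁^2 - a^2) + a * T₂ * (Ξ₁^2 - Ξ₂^2) := by
    nlinarith [mul_nonneg (by linarith : (0:ℝ) ≤ a * T₂ + Ξ₂) hsq,
      mul_nonneg hΞ₂.le (by linarith : (0:ℝ) ≤ Ξ₂^2 - a^2)]
  have habs : -|a| ≤ a * T₂ := by
    rcases le_or_gt 0 a with h | h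
    · nlinarith [abs_nonneg a, mul_nonneg h hT2]
    · rw [abs_of_neg h]; nlinarith
  have hB : 0 ≤ Ξ₁ * Ξ₂ + a^2 + a * T₂ * (Ξ₁ + Ξ₂) := by
    have h1 : |a| ≤ Ξ₂ := ha.le
    have h2 : |a| ≤ Ξ₁ := le_trans h1 hΞ
    nlinarith [mul_nonneg (sub_nonneg.2 h2) (sub_nonneg.2 h1), sq_abs a,
      mul_nonneg (by linarith : (0:ℝ) ≤ a * T₂ + |a|) (by linarith : (0:ℝ) ≤ Ξ₁ + Ξ₂)]
  nlinarith [mul_nonneg (sub_nonneg.2 hT) hC,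
    mul_nonneg (mul_nonneg hT2 (sub_nonneg.2 hΞ)) hB]

lemma formula_rewrite (a Ξ θ : ℝ) (hΞa : |a| < Ξ) :
    (Ξ / 2) * Real.tanh (θ + arctanh (a / Ξ)) =
      (1 / 2) * (Ξ * (a + Ξ * Real.tanh θ) / (Ξ + a * Real.tanh θ)) := by
  have hΞ : 0 < Ξ := lt_of_le_of_lt (abs_nonneg a) hΞa
  have hx : |a / Ξ| < 1 := by
    rw [abs_div, abs_of_pos hΞ, div_lt_one hΞ]; exact hΞa
  rcases abs_lt.1 hΞa with ⟨hal, har⟩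
  set T := Real.tanh θ with hT
  have hT1 : T < 1 := my_tanh_lt_one θ
  have hTm : -1 < T := my_neg_one_lt_tanh θ
  have hden : 0 < Ξ + a * T := by nlinarith
  rw [my_tanh_add, my_tanh_arctanh hx]
  have h0 : (0 : ℝ) < 1 + T * (a / Ξ) := by
    have h : (1 : ℝ) + T * (a / Ξ) = (Ξ + a * T) / Ξ := by field_simp
    rw [h]; positivity
  have key : (T + a / Ξ) / (1 + T * (a / Ξ)) = (a + Ξ * T) / (Ξ + a * T) := by
    rw [div_eq_div_iff h0.ne' hden.ne']
    field_simp
    ring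
  rw [key]
  ring

/-- The tanh-formula `T(t | y₀, s, c)`. -/
noncomputable def tanhFormula (y₀ s c t : ℝ) : ℝ :=
  (1 / 2) * (1 - 1 / s) +
    (Real.sqrt ((1 - 1 / s) ^ 2 - 4 * c / s) / 2) *
      Real.tanh ((s * Real.sqrt ((1 - 1 / s) ^ 2 - 4 * c / s) / 2) * t +
        arctanh ((2 * y₀ - (1 - 1 / s)) / Real.sqrt ((1 - 1 / s) ^ 2 - 4 * c / s)))

/-- The tanh-formula is pointwise nonincreasing in the parameter `c` on `[0, ∞)`:
for admissible `c₁ ≤ c₂`, `T(t | y₀, s, c₂) ≤ T(t | y₀, s, c₁)` for all `t ≥ 0`. -/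
theorem tanh_formula_antitone_in_c (s y₀ c₁ c₂ : ℝ) (hs : 0 < s)
    (hc : c₁ ≤ c₂)
    (hdisc₁ : 0 < (1 - 1 / s) ^ 2 - 4 * c₁ / s)
    (hy₀₁ : |2 * y₀ - (1 - 1 / s)| < Real.sqrt ((1 - 1 / s) ^ 2 - 4 * c₁ / s))
    (hdisc₂ : 0 < (1 - 1 / s) ^ 2 - 4 * c₂ / s)
    (hy₀₂ : |2 * y₀ - (1 - 1 / s)| < Real.sqrt ((1 - 1 / s) ^ 2 - 4 * c₂ / s)) :
    ∀ t : ℝ, 0 ≤ t → tanhFormula y₀ s c₂ t ≤ tanhFormula y₀ s c₁ t := by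
  intro t ht
  set a := 2 * y₀ - (1 - 1 / s) with ha_def
  set Ξ₁ := Real.sqrt ((1 - 1 / s) ^ 2 - 4 * c₁ / s) with hΞ₁def
  set Ξ₂ := Real.sqrt ((1 - 1 / s) ^ 2 - 4 * c₂ / s) with hΞ₂def
  have hΞ : Ξ₂ ≤ Ξ₁ := by
    apply Real.sqrt_le_sqrt
    have h4 : 4 * c₁ / s ≤ 4 * c₂ / s := by gcongr
    linarith
  have hΞ₂pos : 0 < Ξ₂ := lt_of_le_of_lt (abs_nonneg a) hy₀₂
  have hθ : s * Ξ₂ / 2 * t ≤ s * Ξ₁ / 2 * t := by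
    apply mul_le_mul_of_nonneg_right _ ht
    have := mul_le_mul_of_nonneg_left hΞ hs.le
    linarith
  have hθ₂ : 0 ≤ s * Ξ₂ / 2 * t := by positivity
  set T₁ := Real.tanh (s * Ξ₁ / 2 * t) with hT₁def
  set T₂ := Real.tanh (s * Ξ₂ / 2 * t) with hT₂def
  have hT2 : 0 ≤ T₂ := my_tanh_nonneg hθ₂
  have hT : T₂ ≤ T₁ := my_tanh_mono hθ
  have hT1 : T₁ ≤ 1 := (my_tanh_lt_one _).le
  have h1 := formula_rewrite a Ξ₁ (s * Ξ₁ / 2 * t) hy₀₁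
  have h2 := formula_rewrite a Ξ₂ (s * Ξ₂ / 2 * t) hy₀₂
  unfold tanhFormula
  rw [← hΞ₁def, ← hΞ₂def, ← ha_def, ← hT₁def, ← hT₂def] at *
  rw [h1, h2]
  have := key_ineq a Ξ₁ Ξ₂ T₁ T₂ hΞ hy₀₂ hT2 hT hT1
  linarith
end
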